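/- arXiv:2209.12396 — 4 statements merged into one kernel-verified Lean document; each statement's English description precedes it below -/
import Mathlib

section
/- For a finite dataset of N points with group assignment g and cluster assignment c such that every cluster is nonempty and K is nonempty, the minimum over clusters k of the per-cluster group entropy H_k is at most the global group entropy H. -/
/-- Number of points in group `t`: `|g̃_t|` where `g̃_t = {i | g i = t}`. -/
def gcnt {N : ℕ} {T : Type*} [DecidableEq T] (g : Fin N → T) (t : T) : ℕ :=
  (Finset.univ.filter fun i => g i = t).card

/-- Number of points in cluster `k`: `|c̃_k|` where `c̃_k = {i | c i = k}`. -/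
def ccnt {N : ℕ} {K : Type*} [DecidableEq K] (c : Fin N → K) (k : K) : ℕ :=
  (Finset.univ.filter fun i => c i = k).card

/-- Number of points in group `t` and cluster `k`: `|g̃_t ∩ c̃_k|`. -/
def gccnt {N : ℕ} {T K : Type*} [DecidableEq T] [DecidableEq K]
    (g : Fin N → T) (c : Fin N → K) (t : T) (k : K) : ℕ :=
  (Finset.univ.filter fun i => g i = t ∧ c i = k).card

/-- Per-cluster group entropy
`H_k = -∑ t, (|g̃_t ∩ c̃_k|/|c̃_k|) log (|g̃_t ∩ c̃_k|/|c̃_k|)`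
(natural log, `0 log 0 = 0`). -/
noncomputable def Hclu {N : ℕ} {T K : Type*} [Fintype T] [DecidableEq T] [DecidableEq K]
    (g : Fin N → T) (c : Fin N → K) (k : K) : ℝ :=
  -∑ t : T, ((gccnt g c t k : ℝ) / (ccnt c k : ℝ)) *
      Real.log ((gccnt g c t k : ℝ) / (ccnt c k : ℝ))

/-- Global group entropy `H = -∑ t, (|g̃_t|/N) log (|g̃_t|/N)`
(natural log, `0 log 0 = 0`). -/
noncomputable def Hglob {N : ℕ} {T : Type*} [Fintype T] [DecidableEq T]
    (g : Fin N → T) : ℝ :=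
  -∑ t : T, ((gcnt g t : ℝ) / (N : ℝ)) * Real.log ((gcnt g t : ℝ) / (N : ℝ))

/-- The minimum over clusters `k` of the per-cluster group entropy `H_k` is at most
the global group entropy `H`. -/
theorem stmt9 {N : ℕ} {T K : Type*} [Fintype T] [DecidableEq T] [Fintype K] [DecidableEq K]
    [Nonempty K]
    (g : Fin N → T) (c : Fin N → K) (hN : 0 < N)
    (hc : ∀ k : K, 0 < ccnt c k) :
    Finset.univ.inf' Finset.univ_nonempty (fun k : K => Hclu g c k) ≤ Hglob g := by
  classical
  set w : K → ℝ := fun k => (ccnt c k : ℝ) / N with hw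
  have hNpos : (0:ℝ) < N := by exact_mod_cast hN
  have hw0 : ∀ k, 0 ≤ w k := fun k => by positivity
  have hsumc : ∑ k, (ccnt c k : ℕ) = N := by
    have h := Finset.card_eq_sum_card_fiberwise (s := (Finset.univ : Finset (Fin N)))
      (t := (Finset.univ : Finset K)) (f := c) (fun i _ => Finset.mem_univ (c i))
    simpa [ccnt] using h.symm
  have hw1 : ∑ k, w k = 1 := by
    rw [hw, ← Finset.sum_div]
    rw [show ∑ k, (ccnt c k : ℝ) = (N : ℝ) by exact_mod_cast congrArg Nat.cast hsumc]
    field_simp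
  have hsumg : ∀ t, ∑ k, (gccnt g c t k : ℕ) = gcnt g t := by
    intro t
    simp only [gccnt, gcnt]
    rw [Finset.card_eq_sum_card_fiberwise (f := c) (s := Finset.univ.filter fun i => g i = t)
      (t := Finset.univ) (fun i _ => Finset.mem_univ (c i))]
    congr 1
    ext k
    congr 1
    ext i
    simp [and_comm]
  -- Hglob as negMulLog sum
  have hHglob : Hglob g = ∑ t : T, Real.negMulLog ((gcnt g t : ℝ) / N) := by
    simp only [Hglob, Real.negMulLog, neg_mul]
    exact (Finset.sum_neg_distrib _).symm
  have hHclu : ∀ k, Hclu g c k =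
      ∑ t : T, Real.negMulLog ((gccnt g c t k : ℝ) / (ccnt c k : ℝ)) := by
    intro k
    simp only [Hclu, Real.negMulLog, neg_mul]
    exact (Finset.sum_neg_distrib _).symm
  -- step 1: ∑ w k * Hclu k ≤ Hglob
  have step1 : ∑ k, w k * Hclu g c k ≤ Hglob g := by
    rw [hHglob]
    have : ∑ k, w k * Hclu g c k =
        ∑ t : T, ∑ k, w k • Real.negMulLog ((gccnt g c t k : ℝ) / (ccnt c k : ℝ)) := by
      rw [Finset.sum_comm]
      refine Finset.sum_congr rfl fun k _ => ?_
      rw [hHclu k, Finset.mul_sum]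
      simp [smul_eq_mul]
    rw [this]
    refine Finset.sum_le_sum fun t _ => ?_
    have key : ∑ k, w k • ((gccnt g c t k : ℝ) / (ccnt c k : ℝ)) = (gcnt g t : ℝ) / N := by
      have : ∀ k, w k • ((gccnt g c t k : ℝ) / (ccnt c k : ℝ)) = (gccnt g c t k : ℝ) / N := by
        intro k
        have hck : (0:ℝ) < (ccnt c k : ℝ) := by exact_mod_cast hc k
        simp only [hw, smul_eq_mul]
        field_simp
      rw [Finset.sum_congr rfl fun k _ => this k, ← Finset.sum_div]
      congr 1
      exact_mod_cast congrArg Nat.cast (hsumg t)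
    calc ∑ k, w k • Real.negMulLog ((gccnt g c t k : ℝ) / (ccnt c k : ℝ))
        ≤ Real.negMulLog (∑ k, w k • ((gccnt g c t k : ℝ) / (ccnt c k : ℝ))) := by
          refine Real.concaveOn_negMulLog.le_map_sum (fun k _ => hw0 k) hw1 fun k _ => ?_
          have hck : (0:ℝ) < (ccnt c k : ℝ) := by exact_mod_cast hc k
          exact Set.mem_Ici.mpr (by positivity)
      _ = Real.negMulLog ((gcnt g t : ℝ) / N) := by rw [key]
  -- step 2: inf ≤ ∑ w k * Hclu k
  refine le_trans ?_ step1
  calc Finset.univ.inf' Finset.univ_nonempty (fun k : K => Hclu g c k)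
      = ∑ k, w k * Finset.univ.inf' Finset.univ_nonempty (fun k : K => Hclu g c k) := by
        rw [← Finset.sum_mul, hw1, one_mul]
    _ ≤ ∑ k, w k * Hclu g c k := by
        refine Finset.sum_le_sum fun k _ => ?_
        exact mul_le_mul_of_nonneg_left (Finset.inf'_le _ (Finset.mem_univ k)) (hw0 k)
end

section
/- For a finite dataset of N points with group assignment g and cluster assignment c such that every cluster is nonempty, equality ∑_{k∈K} (|c̃_k|/N)·H_k = H holds if and only if the counting independence condition |g̃_t ∩ c̃_k|·N = |g̃_t|·|c̃_k| holds for all groups t and clusters k. -/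
/-- The equality `∑ k, (|c̃_k|/N) · H_k = H` holds iff the counting independence
condition `|g̃_t ∩ c̃_k| · N = |g̃_t| · |c̃_k|` holds for all groups `t` and clusters `k`. -/
theorem stmt10 {N : ℕ} {T K : Type*} [Fintype T] [DecidableEq T] [Fintype K] [DecidableEq K]
    (g : Fin N → T) (c : Fin N → K) (hN : 0 < N)
    (hc : ∀ k : K, 0 < ccnt c k) :
    (∑ k : K, ((ccnt c k : ℝ) / (N : ℝ)) * Hclu g c k = Hglob g)
      ↔ ∀ (t : T) (k : K), gccnt g c t k * N = gcnt g t * ccnt c k := by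
  classical
  have hN' : (N : ℝ) ≠ 0 := Nat.cast_ne_zero.mpr hN.ne'
  have hcc : ∀ k, (ccnt c k : ℝ) ≠ 0 := fun k => Nat.cast_ne_zero.mpr (hc k).ne'
  set w : K → ℝ := fun k => (ccnt c k : ℝ) / (N : ℝ) with hw
  set p : T → K → ℝ := fun t k => (gccnt g c t k : ℝ) / (ccnt c k : ℝ) with hp
  have hsumc : ∑ k : K, ccnt c k = N := by
    simpa [ccnt] using
      (Finset.card_eq_sum_card_fiberwise (f := c) (s := Finset.univ) (t := Finset.univ)
        (fun x _ => Finset.mem_univ _)).symm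
  have hsumg : ∀ t : T, ∑ k : K, gccnt g c t k = gcnt g t := by
    intro t
    have := Finset.card_eq_sum_card_fiberwise (f := c)
      (s := Finset.univ.filter fun i => g i = t) (t := Finset.univ)
      (fun x _ => Finset.mem_univ _)
    simpa [gcnt, gccnt, Finset.filter_filter] using this.symm
  have hw1 : ∑ k : K, w k = 1 := by
    rw [hw, ← Finset.sum_div]
    rw [← Nat.cast_sum, hsumc, div_self hN']
  have hwpos : ∀ k ∈ (Finset.univ : Finset K), 0 < w k := by
    intro k _
    exact div_pos (Nat.cast_pos.mpr (hc k)) (Nat.cast_pos.mpr hN)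
  have hmean : ∀ t : T, ∑ k : K, w k • p t k = (gcnt g t : ℝ) / (N : ℝ) := by
    intro t
    have : ∀ k : K, w k • p t k = (gccnt g c t k : ℝ) / (N : ℝ) := by
      intro k
      rw [hw, hp, smul_eq_mul, div_mul_div_comm, mul_comm ((ccnt c k : ℝ)),
        mul_div_mul_right _ _ (hcc k)]
    rw [Finset.sum_congr rfl fun k _ => this k, ← Finset.sum_div, ← Nat.cast_sum, hsumg t]
  have hmem : ∀ t : T, ∀ k ∈ (Finset.univ : Finset K), p t k ∈ Set.Ici (0 : ℝ) :=
    fun t k _ => Set.mem_Ici.mpr (div_nonneg (Nat.cast_nonneg _) (Nat.cast_nonneg _))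
  -- rewrite both sides using negMulLog
  have hLHS : ∑ k : K, ((ccnt c k : ℝ) / (N : ℝ)) * Hclu g c k
      = ∑ t : T, ∑ k : K, w k • Real.negMulLog (p t k) := by
    rw [Finset.sum_comm]
    refine Finset.sum_congr rfl fun k _ => ?_
    rw [Hclu, mul_neg, Finset.mul_sum, ← Finset.sum_neg_distrib]
    refine Finset.sum_congr rfl fun t _ => ?_
    simp only [Real.negMulLog_eq_neg, hw, hp, smul_eq_mul]
    ring
  have hRHS : Hglob g = ∑ t : T, Real.negMulLog ((gcnt g t : ℝ) / (N : ℝ)) := by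
    rw [Hglob, ← Finset.sum_neg_distrib]
    exact Finset.sum_congr rfl fun t _ => by simp only [Real.negMulLog_eq_neg]
  have hle : ∀ t ∈ (Finset.univ : Finset T),
      ∑ k : K, w k • Real.negMulLog (p t k) ≤ Real.negMulLog ((gcnt g t : ℝ) / (N : ℝ)) := by
    intro t _
    rw [← hmean t]
    exact Real.concaveOn_negMulLog.le_map_sum (fun k _ => (hwpos k (Finset.mem_univ k)).le)
      hw1 (hmem t)
  have hkey : ∀ t : T,
      (Real.negMulLog ((gcnt g t : ℝ) / (N : ℝ)) = ∑ k : K, w k • Real.negMulLog (p t k))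
        ↔ ∀ k ∈ (Finset.univ : Finset K), p t k = (gcnt g t : ℝ) / (N : ℝ) := by
    intro t
    conv_lhs => rw [← hmean t]
    rw [Real.strictConcaveOn_negMulLog.map_sum_eq_iff hwpos hw1 (hmem t)]
    simp_rw [hmean t]
  rw [hLHS, hRHS]
  rw [Finset.sum_eq_sum_iff_of_le hle]
  constructor
  · intro h t k
    have h2 := ((hkey t).mp ((h t (Finset.mem_univ t)).symm)) k (Finset.mem_univ k)
    rw [hp] at h2
    rw [div_eq_div_iff (hcc k) hN'] at h2
    exact_mod_cast h2
  · intro h t _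
    refine ((hkey t).mpr ?_).symm
    intro k _
    have := h t k
    have hcast : (gccnt g c t k : ℝ) * N = (gcnt g t : ℝ) * ccnt c k := by exact_mod_cast this
    rw [hp]
    rw [div_eq_div_iff (hcc k) hN']
    linarith
end

section
/- (Proposition 1, empirical form.) For a finite dataset of N points with group assignment g and cluster assignment c such that every cluster is nonempty and K is nonempty, the minimum over clusters k of the per-cluster group entropy H_k equals the global group entropy H if and only if the counting independence condition |g̃_t ∩ c̃_k|·N = |g̃_t|·|c̃_k| holds for all groups t and clusters k. -/
lemma sum_k' {N : ℕ} {T K : Type*} [Fintype K] [DecidableEq T] [DecidableEq K]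
    (g : Fin N → T) (c : Fin N → K) (t : T) : ∑ k : K, gccnt g c t k = gcnt g t := by
  unfold gccnt gcnt
  rw [Finset.card_eq_sum_card_fiberwise (f := c) (t := Finset.univ) (fun x _ => Finset.mem_univ _)]
  apply Finset.sum_congr rfl
  intro k _
  rw [Finset.filter_filter]

lemma sum_gc' {N : ℕ} {T : Type*} [Fintype T] [DecidableEq T]
    (g : Fin N → T) : ∑ t : T, gcnt g t = N := by
  unfold gcnt
  rw [← Finset.card_eq_sum_card_fiberwise (f := g) (t := Finset.univ) (fun x _ => Finset.mem_univ _)]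
  simp

lemma sum_cc' {N : ℕ} {K : Type*} [Fintype K] [DecidableEq K]
    (c : Fin N → K) : ∑ k : K, ccnt c k = N := by
  unfold ccnt
  rw [← Finset.card_eq_sum_card_fiberwise (f := c) (t := Finset.univ) (fun x _ => Finset.mem_univ _)]
  simp

lemma gccnt_le' {N : ℕ} {T K : Type*} [DecidableEq T] [DecidableEq K]
    (g : Fin N → T) (c : Fin N → K) (t : T) (k : K) : gccnt g c t k ≤ gcnt g t := by
  apply Finset.card_le_card
  intro i hi
  simp only [Finset.mem_filter] at *
  tauto

set_option maxHeartbeats 1000000 in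
/-- Proposition 1 (empirical form): the minimum over clusters `k` of the per-cluster
group entropy `H_k` equals the global group entropy `H` iff the counting independence
condition `|g̃_t ∩ c̃_k| · N = |g̃_t| · |c̃_k|` holds for all `t, k`. -/
theorem stmt11 {N : ℕ} {T K : Type*} [Fintype T] [DecidableEq T] [Fintype K] [DecidableEq K]
    [Nonempty K]
    (g : Fin N → T) (c : Fin N → K) (hN : 0 < N)
    (hc : ∀ k : K, 0 < ccnt c k) :
    (Finset.univ.inf' Finset.univ_nonempty (fun k : K => Hclu g c k) = Hglob g)
      ↔ ∀ (t : T) (k : K), gccnt g c t k * N = gcnt g t * ccnt c k := by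
  classical
  have hNr : (0:ℝ) < (N:ℝ) := by exact_mod_cast hN
  have hn : ∀ k : K, (0:ℝ) < (ccnt c k : ℝ) := fun k => by exact_mod_cast hc k
  set m : T → K → ℝ := fun t k => (gccnt g c t k : ℝ) with hm
  set G : T → ℝ := fun t => (gcnt g t : ℝ) with hG
  set n : K → ℝ := fun k => (ccnt c k : ℝ) with hndef
  set p : T → K → ℝ := fun t k => m t k / N with hpdef
  set q : T → K → ℝ := fun t k => G t * n k / ((N:ℝ) * N) with hqdef
  set F : T → K → ℝ := fun t k => p t k * Real.log (p t k / q t k) - p t k + q t k with hFdef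
  have hmnn : ∀ t k, (0:ℝ) ≤ m t k := fun t k => Nat.cast_nonneg _
  have hGnn : ∀ t, (0:ℝ) ≤ G t := fun t => Nat.cast_nonneg _
  have foldm : ∀ t k, ((gccnt g c t k : ℕ) : ℝ) = m t k := fun _ _ => rfl
  have foldG : ∀ t, ((gcnt g t : ℕ) : ℝ) = G t := fun _ => rfl
  have foldn : ∀ k, ((ccnt c k : ℕ) : ℝ) = n k := fun _ => rfl
  have hmle : ∀ t k, m t k ≤ G t := fun t k => by
    rw [← foldm, ← foldG]; exact_mod_cast gccnt_le' g c t k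
  have hsumk : ∀ t, ∑ k : K, m t k = G t := fun t => by
    simp only [hm, hG]; exact_mod_cast sum_k' g c t
  have hsumG : ∑ t : T, G t = (N:ℝ) := by
    simp only [hG]; exact_mod_cast sum_gc' g
  have hsumn : ∑ k : K, n k = (N:ℝ) := by
    simp only [hndef]; exact_mod_cast sum_cc' c
  have hqnn : ∀ t k, 0 ≤ q t k := fun t k => by
    have := hGnn t; have := (hn k).le
    simp only [hqdef]; positivity
  have hpsum : ∑ t : T, ∑ k : K, p t k = 1 := by
    simp only [hpdef, ← Finset.sum_div, hsumk, hsumG, div_self hNr.ne']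
  have hqsum : ∑ t : T, ∑ k : K, q t k = 1 := by
    simp only [hqdef, ← Finset.sum_div, ← Finset.mul_sum, hsumn, ← Finset.sum_mul, hsumG]
    rw [div_self (by positivity)]
  -- key per-term identity
  have key : ∀ t k, (m t k / N) * (Real.log (m t k / n k) - Real.log (G t / N))
      = p t k * Real.log (p t k / q t k) := by
    intro t k
    rcases eq_or_lt_of_le (hmnn t k) with h0 | hpos
    · simp [hpdef, ← h0]
    · have hGpos : 0 < G t := lt_of_lt_of_le hpos (hmle t k)
      have hnk := hn k
      have h1 : p t k / q t k = (m t k / n k) / (G t / N) := by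
        simp only [hpdef, hqdef]
        field_simp
      have h2 : (m t k / n k : ℝ) ≠ 0 := by positivity
      have h3 : (G t / (N:ℝ)) ≠ 0 := by positivity
      conv_rhs => rw [h1, Real.log_div h2 h3]
  -- decomposition: Hglob - weighted avg of Hclu = ∑∑ F
  have hA : ∑ k : K, (n k / N) * Hclu g c k
      = -∑ t : T, ∑ k : K, (m t k / N) * Real.log (m t k / n k) := by
    have h1 : ∀ k, (n k / N) * Hclu g c k
        = -∑ t : T, (m t k / N) * Real.log (m t k / n k) := by
      intro k
      unfold Hclu
      simp only [foldm, foldn]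
      rw [mul_neg]
      congr 1
      rw [Finset.mul_sum]
      apply Finset.sum_congr rfl
      intro t _
      have hnk : n k ≠ 0 := (by rw [← foldn]; exact (hn k).ne' : n k ≠ 0)
      have hNn : ((N:ℝ)) ≠ 0 := hNr.ne'
      field_simp
    simp_rw [h1]
    rw [Finset.sum_neg_distrib, neg_inj]
    exact Finset.sum_comm
  have hB : Hglob g = -∑ t : T, ∑ k : K, (m t k / N) * Real.log (G t / N) := by
    unfold Hglob
    simp only [foldG]
    congr 1
    apply Finset.sum_congr rfl
    intro t _
    rw [← Finset.sum_mul, ← Finset.sum_div, hsumk]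
  have hD : Hglob g - ∑ k : K, (n k / N) * Hclu g c k = ∑ t : T, ∑ k : K, F t k := by
    have h2 : ∑ t : T, ∑ k : K, F t k
        = ∑ t : T, ∑ k : K, p t k * Real.log (p t k / q t k) := by
      simp only [hFdef, Finset.sum_add_distrib, Finset.sum_sub_distrib, hpsum, hqsum]
      ring
    rw [h2, hA, hB, sub_neg_eq_add, neg_add_eq_sub, ← Finset.sum_sub_distrib]
    apply Finset.sum_congr rfl
    intro t _
    rw [← Finset.sum_sub_distrib]
    apply Finset.sum_congr rfl
    intro k _
    rw [← key t k]
    ring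
  -- nonnegativity and equality condition of F
  have hFnn : ∀ t k, 0 ≤ F t k := by
    intro t k
    rcases eq_or_lt_of_le (hmnn t k) with h0 | hpos
    · have hp0 : p t k = 0 := by simp [hpdef, ← h0]
      simp [hFdef, hp0, hqnn t k]
    · have hGpos : 0 < G t := lt_of_lt_of_le hpos (hmle t k)
      have hppos : 0 < p t k := by simp only [hpdef]; positivity
      have hqpos : 0 < q t k := by
        have := hn k; simp only [hqdef]; positivity
      have hx := Real.log_le_sub_one_of_pos (div_pos hqpos hppos)
      have hlog : Real.log (p t k / q t k) = -Real.log (q t k / p t k) := by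
        rw [← Real.log_inv]; congr 1; field_simp
      have hqp : p t k * (q t k / p t k) = q t k := by field_simp
      simp only [hFdef, hlog]
      nlinarith [mul_le_mul_of_nonneg_left hx hppos.le]
  have hFeq : ∀ t k, F t k = 0 → p t k = q t k := by
    intro t k hFz
    rcases eq_or_lt_of_le (hmnn t k) with h0 | hpos
    · have hp0 : p t k = 0 := by simp [hpdef, ← h0]
      simp [hFdef, hp0] at hFz
      rw [hp0, hFz]
    · have hGpos : 0 < G t := lt_of_lt_of_le hpos (hmle t k)
      have hppos : 0 < p t k := by simp only [hpdef]; positivity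
      have hqpos : 0 < q t k := by
        have := hn k; simp only [hqdef]; positivity
      by_contra hne
      have hne1 : q t k / p t k ≠ 1 :=
        fun h => hne ((div_eq_one_iff_eq hppos.ne').mp h).symm
      have hx := Real.log_lt_sub_one_of_pos (div_pos hqpos hppos) hne1
      have hlog : Real.log (p t k / q t k) = -Real.log (q t k / p t k) := by
        rw [← Real.log_inv]; congr 1; field_simp
      have hqp : p t k * (q t k / p t k) = q t k := by field_simp
      simp only [hFdef, hlog] at hFz
      nlinarith [mul_lt_mul_of_pos_left hx hppos]
  constructor
  · intro hmin
    have hlow : Hglob g ≤ ∑ k : K, (n k / N) * Hclu g c k := by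
      have h1 : ∀ k ∈ (Finset.univ : Finset K),
          (n k / N) * Hglob g ≤ (n k / N) * Hclu g c k := by
        intro k _
        apply mul_le_mul_of_nonneg_left _ (by positivity : (0:ℝ) ≤ n k / N)
        rw [← hmin]
        exact Finset.inf'_le _ (Finset.mem_univ k)
      calc Hglob g = ∑ k : K, (n k / N) * Hglob g := by
            rw [← Finset.sum_mul, ← Finset.sum_div, hsumn, div_self hNr.ne', one_mul]
        _ ≤ _ := Finset.sum_le_sum h1
    have hFsumnn : (0:ℝ) ≤ ∑ t : T, ∑ k : K, F t k :=
      Finset.sum_nonneg fun t _ => Finset.sum_nonneg fun k _ => hFnn t k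
    have hzero : ∑ t : T, ∑ k : K, F t k = 0 := by linarith [hD]
    intro t k
    have h5 := (Finset.sum_eq_zero_iff_of_nonneg
      (fun t _ => Finset.sum_nonneg fun k _ => hFnn t k)).mp hzero t (Finset.mem_univ t)
    have h6 := (Finset.sum_eq_zero_iff_of_nonneg
      (fun k _ => hFnn t k)).mp h5 k (Finset.mem_univ k)
    have h7 := hFeq t k h6
    have h8 : m t k * N = G t * n k := by
      simp only [hpdef, hqdef] at h7
      rw [div_eq_div_iff hNr.ne' (by positivity : ((N:ℝ) * N) ≠ 0)] at h7
      have h9 : m t k * ↑N * ↑N = G t * n k * ↑N := by linear_combination h7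
      exact mul_right_cancel₀ hNr.ne' h9
    rw [← foldm, ← foldG, ← foldn] at h8
    exact_mod_cast h8
  · intro hind
    have hH : ∀ k, Hclu g c k = Hglob g := by
      intro k
      unfold Hclu Hglob
      congr 1
      apply Finset.sum_congr rfl
      intro t _
      simp only [foldm, foldn, foldG]
      have heq : m t k / n k = G t / N := by
        rw [div_eq_div_iff (by rw [← foldn]; exact hn k : (0:ℝ) < n k).ne' hNr.ne']
        rw [← foldm, ← foldG, ← foldn]
        exact_mod_cast hind t k
      rw [heq]
    apply le_antisymm
    · calc Finset.univ.inf' Finset.univ_nonempty (fun k : K => Hclu g c k)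
          ≤ Hclu g c (Classical.arbitrary K) :=
            Finset.inf'_le _ (Finset.mem_univ _)
        _ = Hglob g := hH _
    · apply Finset.le_inf'
      intro k _
      rw [hH k]
end

section
/- For a finite dataset of N points with group assignment g and cluster assignment c such that every cluster is nonempty, K is nonempty, and the global group entropy H is strictly positive, the quantity MNCE = (min_{k∈K} H_k) / H satisfies 0 ≤ MNCE ≤ 1. -/
set_option linter.unusedSectionVars false

section
variable {N : ℕ} {T K : Type*} [Fintype T] [DecidableEq T] [Fintype K] [DecidableEq K]

lemma sum_gccnt_k (g : Fin N → T) (c : Fin N → K) (t : T) :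
    ∑ k : K, gccnt g c t k = gcnt g t := by
  classical
  simp only [gccnt, gcnt, Finset.card_filter]
  rw [Finset.sum_comm]
  refine Finset.sum_congr rfl fun i _ => ?_
  by_cases h : g i = t <;> simp [h, Finset.sum_ite_eq]

lemma sum_gcnt (g : Fin N → T) : ∑ t : T, gcnt g t = N := by
  classical
  simp only [gcnt, Finset.card_filter]
  rw [Finset.sum_comm]
  simp [Finset.sum_ite_eq]

lemma sum_ccnt (c : Fin N → K) : ∑ k : K, ccnt c k = N := by
  classical
  simp only [ccnt, Finset.card_filter]
  rw [Finset.sum_comm]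
  simp [Finset.sum_ite_eq]

lemma gccnt_le_ccnt (g : Fin N → T) (c : Fin N → K) (t : T) (k : K) :
    gccnt g c t k ≤ ccnt c k := by
  apply Finset.card_le_card
  intro i hi
  simp only [Finset.mem_filter] at *
  exact ⟨hi.1, hi.2.2⟩

lemma gccnt_le_gcnt (g : Fin N → T) (c : Fin N → K) (t : T) (k : K) :
    gccnt g c t k ≤ gcnt g t := by
  apply Finset.card_le_card
  intro i hi
  simp only [Finset.mem_filter] at *
  exact ⟨hi.1, hi.2.1⟩

lemma Hclu_nonneg (g : Fin N → T) (c : Fin N → K) (k : K) : 0 ≤ Hclu g c k := by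
  rw [Hclu, neg_nonneg]
  apply Finset.sum_nonpos
  intro t _
  have h0 : (0:ℝ) ≤ (gccnt g c t k : ℝ) / (ccnt c k : ℝ) :=
    div_nonneg (Nat.cast_nonneg _) (Nat.cast_nonneg _)
  have h1 : (gccnt g c t k : ℝ) / (ccnt c k : ℝ) ≤ 1 := by
    rcases Nat.eq_zero_or_pos (ccnt c k) with h | h
    · simp [h]
    · rw [div_le_one (by exact_mod_cast h)]
      exact_mod_cast gccnt_le_ccnt g c t k
  exact mul_nonpos_of_nonneg_of_nonpos h0 (Real.log_nonpos h0 h1)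

lemma cond_le_glob (g : Fin N → T) (c : Fin N → K) (hN : 0 < N)
    (hc : ∀ k : K, 0 < ccnt c k) :
    ∑ k : K, ((ccnt c k : ℝ) / N) * Hclu g c k ≤ Hglob g := by
  have hNR : (0:ℝ) < N := by exact_mod_cast hN
  have hL : ∑ k : K, ((ccnt c k : ℝ) / N) * Hclu g c k
      = -∑ k : K, ∑ t : T, ((gccnt g c t k : ℝ) / N) *
          Real.log ((gccnt g c t k : ℝ) / (ccnt c k : ℝ)) := by
    have hterm : ∀ k : K, ((ccnt c k : ℝ) / N) * Hclu g c k
        = -∑ t : T, ((gccnt g c t k : ℝ) / N) *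
            Real.log ((gccnt g c t k : ℝ) / (ccnt c k : ℝ)) := by
      intro k
      rw [Hclu, mul_neg, Finset.mul_sum]
      congr 1
      refine Finset.sum_congr rfl fun t _ => ?_
      have hck : ((ccnt c k : ℝ)) ≠ 0 := by exact_mod_cast (hc k).ne'
      field_simp
    rw [Finset.sum_congr rfl fun k _ => hterm k, Finset.sum_neg_distrib]
  have hR : Hglob g = -∑ t : T, ∑ k : K, ((gccnt g c t k : ℝ) / N) *
      Real.log ((gcnt g t : ℝ) / N) := by
    rw [Hglob]
    congr 1
    refine Finset.sum_congr rfl fun t _ => ?_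
    rw [← Finset.sum_mul, ← Finset.sum_div]
    congr 2
    exact_mod_cast (sum_gccnt_k g c t).symm
  have hswap : ∑ k : K, ∑ t : T, ((gccnt g c t k : ℝ) / N) *
        Real.log ((gccnt g c t k : ℝ) / (ccnt c k : ℝ))
      = ∑ t : T, ∑ k : K, ((gccnt g c t k : ℝ) / N) *
        Real.log ((gccnt g c t k : ℝ) / (ccnt c k : ℝ)) := Finset.sum_comm
  rw [hL, hR, hswap, neg_le_neg_iff, ← sub_nonpos]
  have key : ∀ t k, ((gccnt g c t k : ℝ) / N) * Real.log ((gcnt g t : ℝ) / N)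
      - ((gccnt g c t k : ℝ) / N) * Real.log ((gccnt g c t k : ℝ) / (ccnt c k : ℝ))
      ≤ (gcnt g t : ℝ) * (ccnt c k : ℝ) / (N * N) - (gccnt g c t k : ℝ) / N := by
    intro t k
    rcases Nat.eq_zero_or_pos (gccnt g c t k) with h0 | h0
    · simp only [h0, Nat.cast_zero, zero_div, zero_mul, sub_zero]
      positivity
    · have hgc : (0:ℝ) < (gccnt g c t k : ℝ) := by exact_mod_cast h0
      have hg : (0:ℝ) < (gcnt g t : ℝ) := by
        exact_mod_cast lt_of_lt_of_le h0 (gccnt_le_gcnt g c t k)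
      have hck : (0:ℝ) < (ccnt c k : ℝ) := by exact_mod_cast hc k
      set a : ℝ := (gccnt g c t k : ℝ) / N with ha
      set b : ℝ := (gcnt g t : ℝ) * (ccnt c k : ℝ) / (N * N) with hb
      have hapos : (0:ℝ) < a := by rw [ha]; positivity
      have hbpos : (0:ℝ) < b := by rw [hb]; positivity
      have hlog : Real.log ((gcnt g t : ℝ) / N) - Real.log ((gccnt g c t k : ℝ) / (ccnt c k : ℝ))
          = Real.log (b / a) := by
        rw [Real.log_div hg.ne' hNR.ne', Real.log_div hgc.ne' hck.ne',
            Real.log_div hbpos.ne' hapos.ne', ha, hb,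
            Real.log_div (by positivity) (by positivity),
            Real.log_mul hg.ne' hck.ne', Real.log_mul hNR.ne' hNR.ne',
            Real.log_div hgc.ne' hNR.ne']
        ring
      rw [← mul_sub, hlog]
      calc a * Real.log (b / a) ≤ a * (b / a - 1) := by
            apply mul_le_mul_of_nonneg_left _ hapos.le
            exact Real.log_le_sub_one_of_pos (by positivity)
        _ = b - a := by field_simp
  have hsum : ∑ t : T, ∑ k : K,
      (((gccnt g c t k : ℝ) / N) * Real.log ((gcnt g t : ℝ) / N)
        - ((gccnt g c t k : ℝ) / N) * Real.log ((gccnt g c t k : ℝ) / (ccnt c k : ℝ)))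
      ≤ ∑ t : T, ∑ k : K,
      ((gcnt g t : ℝ) * (ccnt c k : ℝ) / (N * N) - (gccnt g c t k : ℝ) / N) :=
    Finset.sum_le_sum fun t _ => Finset.sum_le_sum fun k _ => key t k
  have h1 : ∑ t : T, ∑ k : K, (gcnt g t : ℝ) * (ccnt c k : ℝ) / (N * N) = 1 := by
    simp only [← Finset.sum_div, ← Finset.sum_mul, ← Finset.mul_sum]
    rw [← Nat.cast_sum, ← Nat.cast_sum, sum_gcnt, sum_ccnt]
    field_simp
  have h2 : ∑ t : T, ∑ k : K, (gccnt g c t k : ℝ) / N = 1 := by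
    simp only [← Finset.sum_div, ← Nat.cast_sum, sum_gccnt_k, sum_gcnt]
    field_simp
  calc ∑ t : T, ∑ k : K, ((gccnt g c t k : ℝ) / N) * Real.log ((gcnt g t : ℝ) / N)
          - ∑ t : T, ∑ k : K, ((gccnt g c t k : ℝ) / N) * Real.log ((gccnt g c t k : ℝ) / (ccnt c k : ℝ))
      = ∑ t : T, ∑ k : K,
        (((gccnt g c t k : ℝ) / N) * Real.log ((gcnt g t : ℝ) / N)
          - ((gccnt g c t k : ℝ) / N) * Real.log ((gccnt g c t k : ℝ) / (ccnt c k : ℝ))) := by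
        simp only [← Finset.sum_sub_distrib]
    _ ≤ ∑ t : T, ∑ k : K,
        ((gcnt g t : ℝ) * (ccnt c k : ℝ) / (N * N) - (gccnt g c t k : ℝ) / N) := hsum
    _ = 0 := by simp only [Finset.sum_sub_distrib, h1, h2, sub_self]
end

/-- With strictly positive global group entropy `H`, the quantity
`MNCE = (min_k H_k) / H` satisfies `0 ≤ MNCE ≤ 1`. -/
theorem stmt12 {N : ℕ} {T K : Type*} [Fintype T] [DecidableEq T] [Fintype K] [DecidableEq K]
    [Nonempty K]
    (g : Fin N → T) (c : Fin N → K) (hN : 0 < N)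
    (hc : ∀ k : K, 0 < ccnt c k) (hH : 0 < Hglob g) :
    0 ≤ Finset.univ.inf' Finset.univ_nonempty (fun k : K => Hclu g c k) / Hglob g ∧
    Finset.univ.inf' Finset.univ_nonempty (fun k : K => Hclu g c k) / Hglob g ≤ 1 := by
  set m := Finset.univ.inf' Finset.univ_nonempty (fun k : K => Hclu g c k) with hm
  have hm0 : 0 ≤ m :=
    Finset.le_inf' _ _ fun k _ => Hclu_nonneg g c k
  have hw : ∑ k : K, (ccnt c k : ℝ) / N = 1 := by
    rw [← Finset.sum_div, ← Nat.cast_sum, sum_ccnt]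
    field_simp
  have hmH : m ≤ Hglob g := by
    calc m = ∑ k : K, ((ccnt c k : ℝ) / N) * m := by
          rw [← Finset.sum_mul, hw, one_mul]
      _ ≤ ∑ k : K, ((ccnt c k : ℝ) / N) * Hclu g c k := by
          refine Finset.sum_le_sum fun k _ => ?_
          exact mul_le_mul_of_nonneg_left (Finset.inf'_le _ (Finset.mem_univ k))
            (by positivity)
      _ ≤ Hglob g := cond_le_glob g c hN hc
  exact ⟨div_nonneg hm0 hH.le, (div_le_one hH).mpr hmH⟩
end
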